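/- Let R be a restriction semigroup and G ⊆ R a subset such that the least subset of R containing G and closed under multiplication and ⁺ is R itself. Then: (1) every element u ∈ R which is not a projection can be written as u = e·v, where e is a projection of R and v is a product of finitely many elements of G; (2) every projection u of R can be written as u = a₁⁺ · a₂⁺ ⋯ aₙ⁺, where n ≥ 1 and each aᵢ is a product of finitely many elements of G. -/
import Mathlib


/-- `e` is a projection: an element of the form `a⁺`. -/
def IsProjection {R : Type*} (plus : R → R) (e : R) : Prop := ∃ a, e = plus a

/-- if a restriction semigroup `R` is generated by `G` as a
`(·,⁺)`-algebra, then (1) every non-projection `u` can be written as `u = e·v`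
with `e` a projection and `v` a product of elements of `G`, and (2) every
projection is a product `a₁⁺ ⋯ aₙ⁺` (`n ≥ 1`) where each `aᵢ` is a product of
elements of `G`. -/
theorem stmt_12 {R : Type*} [Semigroup R] (plus : R → R)
    (h1 : ∀ x : R, plus x * x = x)
    (h2 : ∀ x y : R, plus x * plus y = plus y * plus x)
    (h3 : ∀ x y : R, plus (plus x * y) = plus x * plus y)
    (h4 : ∀ x y : R, x * plus y = plus (x * y) * x)
    (G : Set R)
    (hgen : ∀ T : Set R, G ⊆ T → (∀ a ∈ T, ∀ b ∈ T, a * b ∈ T) →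
      (∀ a ∈ T, plus a ∈ T) → T = Set.univ) :
    (∀ u : R, ¬ IsProjection plus u →
      ∃ e v : R, IsProjection plus e ∧ v ∈ Subsemigroup.closure G ∧ u = e * v) ∧
    (∀ u : R, IsProjection plus u →
      u ∈ Subsemigroup.closure {b : R | ∃ a ∈ Subsemigroup.closure G, b = plus a}) := by
  set C := Subsemigroup.closure G with hC
  set P := Subsemigroup.closure {b : R | ∃ a ∈ C, b = plus a} with hP
  -- projections are idempotent and fixed by plus
  have idem : ∀ x : R, plus x * plus x = plus x := by
    intro x
    have := h3 x x
    rw [h1] at this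
    exact this.symm
  have fix : ∀ x : R, plus (plus x) = plus x := by
    intro x
    have h := h3 x (plus x)
    rw [idem] at h
    calc plus (plus x) = plus x * plus (plus x) := h
      _ = plus (plus x) * plus x := h2 x (plus x)
      _ = plus x := h1 (plus x)
  -- every element of P is fixed by plus
  have projP : ∀ u : R, u ∈ P → plus u = u := by
    intro u hu
    induction hu using Subsemigroup.closure_induction with
    | mem x hx =>
      obtain ⟨a, _, rfl⟩ := hx
      exact fix a
    | mul x y _ _ hx hy =>
      calc plus (x * y) = plus (plus x * y) := by rw [hx]
        _ = plus x * plus y := h3 x y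
        _ = x * y := by rw [hx, hy]
  have comm : ∀ b : R, b ∈ P → ∀ a : R, a ∈ (C : Set R) → ∃ f ∈ P, a * b = f * a := by
    intro b hb
    induction hb using Subsemigroup.closure_induction with
    | mem x hx =>
      obtain ⟨c, hc, rfl⟩ := hx
      intro a ha
      refine ⟨plus (a * c), ?_, h4 a c⟩
      exact Subsemigroup.subset_closure ⟨a * c, mul_mem ha hc, rfl⟩
    | mul x y _ _ hx hy =>
      intro a ha
      obtain ⟨f1, hf1, e1⟩ := hx a ha
      obtain ⟨f2, hf2, e2⟩ := hy a ha
      refine ⟨f1 * f2, mul_mem hf1 hf2, ?_⟩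
      calc a * (x * y) = (a * x) * y := (mul_assoc a x y).symm
        _ = f1 * (a * y) := by rw [e1, mul_assoc]
        _ = f1 * (f2 * a) := by rw [e2]
        _ = f1 * f2 * a := (mul_assoc f1 f2 a).symm
  -- the key set
  set T : Set R := {u | u ∈ C ∨ u ∈ P ∨ ∃ e ∈ P, ∃ v ∈ C, u = e * v} with hT
  have hTuniv : T = Set.univ := by
    apply hgen
    · intro g hg
      exact Or.inl (Subsemigroup.subset_closure hg)
    · rintro a (ha | ha | ⟨e, he, v, hv, rfl⟩) b (hb | hb | ⟨e', he', v', hv', rfl⟩)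
      · exact Or.inl (mul_mem ha hb)
      · obtain ⟨f, hf, hfe⟩ := comm b hb a ha
        exact Or.inr (Or.inr ⟨f, hf, a, ha, hfe⟩)
      · obtain ⟨f, hf, hfe⟩ := comm e' he' a ha
        refine Or.inr (Or.inr ⟨f, hf, a * v', mul_mem ha hv', ?_⟩)
        calc a * (e' * v') = (a * e') * v' := (mul_assoc _ _ _).symm
          _ = f * a * v' := by rw [hfe]
          _ = f * (a * v') := mul_assoc _ _ _
      · exact Or.inr (Or.inr ⟨a, ha, b, hb, rfl⟩)
      · exact Or.inr (Or.inl (mul_mem ha hb))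
      · exact Or.inr (Or.inr ⟨a * e', mul_mem ha he', v', hv', (mul_assoc _ _ _).symm⟩)
      · exact Or.inr (Or.inr ⟨e, he, v * b, mul_mem hv hb, mul_assoc _ _ _⟩)
      · obtain ⟨f, hf, hfe⟩ := comm b hb v hv
        refine Or.inr (Or.inr ⟨e * f, mul_mem he hf, v, hv, ?_⟩)
        rw [mul_assoc, hfe, ← mul_assoc]
      · obtain ⟨f, hf, hfe⟩ := comm e' he' v hv
        refine Or.inr (Or.inr ⟨e * f, mul_mem he hf, v * v', mul_mem hv hv', ?_⟩)
        calc e * v * (e' * v') = e * ((v * e') * v') := by rw [mul_assoc, mul_assoc]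
          _ = e * ((f * v) * v') := by rw [hfe]
          _ = e * f * (v * v') := by rw [mul_assoc, mul_assoc]
    · rintro a (ha | ha | ⟨e, he, v, hv, rfl⟩)
      · exact Or.inr (Or.inl (Subsemigroup.subset_closure ⟨a, ha, rfl⟩))
      · exact Or.inr (Or.inl (by rw [projP a ha]; exact ha))
      · refine Or.inr (Or.inl ?_)
        have : plus (e * v) = e * plus v := by
          conv_lhs => rw [← projP e he]
          rw [h3, projP e he]
        rw [this]
        exact mul_mem he (Subsemigroup.subset_closure ⟨v, hv, rfl⟩)
  have hall : ∀ u : R, u ∈ T := fun u => hTuniv ▸ Set.mem_univ u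
  constructor
  · intro u hu
    rcases hall u with hC' | hP' | ⟨e, he, v, hv, rfl⟩
    · exact ⟨plus u, u, ⟨u, rfl⟩, hC', (h1 u).symm⟩
    · exact absurd ⟨u, (projP u hP').symm⟩ hu
    · exact ⟨e, v, ⟨e, (projP e he).symm⟩, hv, rfl⟩
  · intro u hu
    obtain ⟨a, rfl⟩ := hu
    rcases hall (plus a) with hC' | hP' | ⟨e, he, v, hv, huv⟩
    · exact Subsemigroup.subset_closure ⟨plus a, hC', (fix a).symm⟩
    · exact hP'
    · have : plus a = e * plus v := by
        calc plus a = plus (plus a) := (fix a).symm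
          _ = plus (e * v) := by rw [huv]
          _ = plus (plus e * v) := by rw [projP e he]
          _ = plus e * plus v := h3 e v
          _ = e * plus v := by rw [projP e he]
      rw [this]
      exact mul_mem he (Subsemigroup.subset_closure ⟨v, hv, rfl⟩)
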